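/- Let G1 be a group with finite generating set S, let H1, H2 be subgroups of G1 with an isomorphism φ : H1 → H2, let S_H be a finite generating set of H1, and assume S_H ∪ φ(S_H) ⊆ S. Let G = ⟨G1, t | t⁻¹ht = φ(h) for all h ∈ H1⟩ be the HNN extension of G1 along φ with stable letter t, identify G1 with its image in G, and let T = S ∪ {t}, a finite generating set of G. Suppose there is a positive integer M such that |h|_{S_H} ≤ M·|h|_T for every h ∈ H1 and |k|_{φ(S_H)} ≤ M·|k|_T for every k ∈ H2. Then |g|_S ≤ M·|g|_T for every g ∈ G1; in particular G1 is undistorted in G. -/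

import Mathlib

/-- The word length of `g` with respect to a (symmetrized) generating set `S`. -/
noncomputable def wordLength {G : Type*} [Group G] (S : Set G) (g : G) : ℕ :=
  sInf {n | ∃ l : List G, l.length = n ∧ (∀ x ∈ l, x ∈ S ∨ x⁻¹ ∈ S) ∧ l.prod = g}

namespace HNNAux

variable {G : Type*} [Group G]

/-- `g` is representable by a word of length at most `n` in `S ∪ S⁻¹`. -/
def Rep (S : Set G) (g : G) (n : ℕ) : Prop :=
  ∃ l : List G, l.length ≤ n ∧ (∀ x ∈ l, x ∈ S ∨ x⁻¹ ∈ S) ∧ l.prod = g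

theorem Rep.mono {S : Set G} {g : G} {m n : ℕ} (h : Rep S g m) (hmn : m ≤ n) : Rep S g n := by
  obtain ⟨l, h1, h2, h3⟩ := h
  exact ⟨l, h1.trans hmn, h2, h3⟩

theorem Rep.one (S : Set G) : Rep S 1 0 := ⟨[], by simp, by simp, by simp⟩

theorem Rep.single {S : Set G} {g : G} (h : g ∈ S ∨ g⁻¹ ∈ S) : Rep S g 1 :=
  ⟨[g], by simp, by simpa using h, by simp⟩

theorem Rep.mul {S : Set G} {a b : G} {m n : ℕ} (ha : Rep S a m) (hb : Rep S b n) :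
    Rep S (a * b) (m + n) := by
  obtain ⟨la, ha1, ha2, ha3⟩ := ha
  obtain ⟨lb, hb1, hb2, hb3⟩ := hb
  refine ⟨la ++ lb, ?_, ?_, by simp [ha3, hb3]⟩
  · simpa using Nat.add_le_add ha1 hb1
  · intro x hx
    rcases List.mem_append.1 hx with h | h
    · exact ha2 x h
    · exact hb2 x h

theorem wordLength_le_of_rep {S : Set G} {g : G} {n : ℕ} (h : Rep S g n) :
    wordLength S g ≤ n := by
  obtain ⟨l, h1, h2, h3⟩ := h
  exact le_trans (Nat.sInf_le ⟨l, rfl, h2, h3⟩) h1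

theorem exists_word_of_mem_closure {S : Set G} {g : G} (h : g ∈ Subgroup.closure S) :
    ∃ l : List G, (∀ x ∈ l, x ∈ S ∨ x⁻¹ ∈ S) ∧ l.prod = g := by
  induction h using Subgroup.closure_induction with
  | mem x hx => exact ⟨[x], by simpa using Or.inl hx, by simp⟩
  | one => exact ⟨[], by simp, by simp⟩
  | mul a b _ _ iha ihb =>
    obtain ⟨la, ha1, ha2⟩ := iha
    obtain ⟨lb, hb1, hb2⟩ := ihb
    refine ⟨la ++ lb, ?_, by simp [ha2, hb2]⟩
    intro x hx
    rcases List.mem_append.1 hx with h | h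
    · exact ha1 x h
    · exact hb1 x h
  | inv a _ iha =>
    obtain ⟨l, h1, h2⟩ := iha
    refine ⟨(l.map fun x => x⁻¹).reverse, ?_, by rw [← List.prod_inv_reverse, h2]⟩
    intro x hx
    simp only [List.mem_reverse, List.mem_map] at hx
    obtain ⟨y, hy, rfl⟩ := hx
    rcases h1 y hy with h | h
    · exact Or.inr (by simpa using h)
    · exact Or.inl h

theorem rep_of_wordLength_le {S : Set G} {g : G} (hg : g ∈ Subgroup.closure S) {n : ℕ}
    (h : wordLength S g ≤ n) : Rep S g n := by
  obtain ⟨l, h1, h2⟩ := exists_word_of_mem_closure hg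
  have hne : {n | ∃ l : List G, l.length = n ∧ (∀ x ∈ l, x ∈ S ∨ x⁻¹ ∈ S) ∧ l.prod = g}.Nonempty :=
    ⟨l.length, l, rfl, h1, h2⟩
  obtain ⟨l', hl'1, hl'2, hl'3⟩ := Nat.sInf_mem hne
  exact ⟨l', le_trans (le_of_eq hl'1) h, hl'2, hl'3⟩

theorem exists_decomp_of_not_chain' {α : Type*} {R : α → α → Prop} :
    ∀ l : List α, ¬ l.IsChain R → ∃ l₁ a b l₂, l = l₁ ++ a :: b :: l₂ ∧ ¬ R a b
  | [], h => absurd List.isChain_nil h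
  | [a], h => absurd (List.isChain_singleton a) h
  | a :: b :: l, h => by
    rw [List.isChain_cons_cons] at h
    by_cases hab : R a b
    · have h' : ¬ (b :: l).IsChain R := fun hc => h ⟨hab, hc⟩
      obtain ⟨l₁, x, y, l₂, hl, hxy⟩ := exists_decomp_of_not_chain' (b :: l) h'
      exact ⟨a :: l₁, x, y, l₂, by rw [hl]; simp, hxy⟩
    · exact ⟨[], a, b, l, by simp, hab⟩

theorem Int.units_neg_of_ne {u v : ℤˣ} (h : u ≠ v) : v = -u := by
  rcases Int.units_eq_one_or u with rfl | rfl <;>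
    rcases Int.units_eq_one_or v with rfl | rfl <;> simp_all


open HNNExtension HNNExtension.NormalWord

section HNN

variable {G1 : Type*} [Group G1] {H1 H2 : Subgroup G1} {φ : H1 ≃* H2}

def blockProd (b : List (G1 × ℕ)) : G1 := (b.map Prod.fst).prod

def blockCost (b : List (G1 × ℕ)) : ℕ := (b.map Prod.snd).sum

def wordProd (φ : H1 ≃* H2) (b₀ : List (G1 × ℕ)) (L : List (ℤˣ × List (G1 × ℕ))) :
    HNNExtension G1 H1 H2 φ :=
  of (blockProd b₀) * (L.map fun p => t ^ (p.1 : ℤ) * of (blockProd p.2)).prod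

def wordCost (b₀ : List (G1 × ℕ)) (L : List (ℤˣ × List (G1 × ℕ))) : ℕ :=
  blockCost b₀ + (L.map fun p => 1 + blockCost p.2).sum

theorem rep_blockProd {S : Set G1} (M : ℕ) :
    ∀ b : List (G1 × ℕ), (∀ x ∈ b, Rep S x.1 (M * x.2)) →
      Rep S (blockProd b) (M * blockCost b)
  | [], _ => by simpa [blockProd, blockCost] using Rep.one S
  | x :: b, h => by
    have h1 : Rep S x.1 (M * x.2) := h x (by simp)
    have h2 : Rep S (blockProd b) (M * blockCost b) :=
      rep_blockProd M b fun y hy => h y (by simp [hy])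
    have := h1.mul h2
    rw [← Nat.mul_add] at this
    simpa [blockProd, blockCost] using this

theorem rep_blockProd_T {T : Set (HNNExtension G1 H1 H2 φ)} :
    ∀ b : List (G1 × ℕ), (∀ x ∈ b, Rep T (of (φ := φ) x.1) x.2) →
      Rep T (of (φ := φ) (blockProd b)) (blockCost b)
  | [], _ => by simpa [blockProd, blockCost] using Rep.one T
  | x :: b, h => by
    have h1 : Rep T (of (φ := φ) x.1) x.2 := h x (by simp)
    have h2 : Rep T (of (φ := φ) (blockProd b)) (blockCost b) :=
      rep_blockProd_T b fun y hy => h y (by simp [hy])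
    have := h1.mul h2
    simpa [blockProd, blockCost, map_mul] using this

end HNN
section HNN2

variable {G1 : Type*} [Group G1] {H1 H2 : Subgroup G1} {φ : H1 ≃* H2}

theorem blockProd_append_cons (b : List (G1 × ℕ)) (x : G1 × ℕ) (b' : List (G1 × ℕ)) :
    blockProd (b ++ x :: b') = blockProd b * (x.1 * blockProd b') := by
  simp [blockProd]

theorem key {S : Set G1} {T : Set (HNNExtension G1 H1 H2 φ)} {M : ℕ}
    (ht : (t : HNNExtension G1 H1 H2 φ) ∈ T)
    (hA : ∀ (a : H1) (c : ℕ), wordLength T (of (φ := φ) ((φ a : H2) : G1)) ≤ c →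
      Rep S ((φ a : H2) : G1) (M * c))
    (hB : ∀ (b : H2) (c : ℕ), wordLength T (of (φ := φ) ((φ.symm b : H1) : G1)) ≤ c →
      Rep S ((φ.symm b : H1) : G1) (M * c)) :
    ∀ (N : ℕ) (b₀ : List (G1 × ℕ)) (L : List (ℤˣ × List (G1 × ℕ))),
      L.length ≤ N →
      (∀ x ∈ b₀, Rep T (of (φ := φ) x.1) x.2 ∧ Rep S x.1 (M * x.2)) →
      (∀ p ∈ L, ∀ x ∈ p.2, Rep T (of (φ := φ) x.1) x.2 ∧ Rep S x.1 (M * x.2)) →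
      ∀ g : G1, wordProd φ b₀ L = of g → Rep S g (M * wordCost b₀ L) := by
  have base : ∀ (b₀ : List (G1 × ℕ)),
      (∀ x ∈ b₀, Rep T (of (φ := φ) x.1) x.2 ∧ Rep S x.1 (M * x.2)) →
      ∀ g : G1, wordProd φ b₀ [] = of g → Rep S g (M * wordCost b₀ []) := by
    intro b₀ hb g hprod
    have h1 : of (φ := φ) (blockProd b₀) = of g := by simpa [wordProd] using hprod
    have hg : blockProd b₀ = g := HNNExtension.of_injective φ h1
    have := rep_blockProd M b₀ fun x hx => (hb x hx).2
    rw [hg] at this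
    simpa [wordCost] using this
  intro N
  induction N with
  | zero =>
    intro b₀ L hlen hb hL g hprod
    have hLnil : L = [] := List.length_eq_zero_iff.mp (Nat.le_zero.mp hlen)
    subst hLnil
    exact base b₀ hb g hprod
  | succ N ih =>
    intro b₀ L hlen hb hL g hprod
    by_cases hLnil : L = []
    · subst hLnil
      exact base b₀ hb g hprod
    by_cases hc : (L.map fun p => (p.1, blockProd p.2)).IsChain
        (fun a b => a.2 ∈ toSubgroup H1 H2 a.1 → a.1 = b.1)
    · -- the word is reduced: Britton's lemma forces `L = []`, contradiction
      exfalso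
      let w : ReducedWord G1 H1 H2 :=
        ⟨blockProd b₀, L.map fun p => (p.1, blockProd p.2), hc⟩
      have hw : w.prod φ = wordProd φ b₀ L := by
        simp [ReducedWord.prod, wordProd, List.map_map, Function.comp_def, w]
      have hnil : w.toList = [] :=
        ReducedWord.toList_eq_nil_of_mem_of_range φ w ⟨g, (hw.trans hprod).symm⟩
      have : L.map (fun p => (p.1, blockProd p.2)) = [] := hnil
      exact hLnil (List.map_eq_nil_iff.mp this)
    · -- there is a pinch
      rw [List.isChain_map] at hc
      obtain ⟨L₁, pp, qq, L₂, hLeq, hR⟩ := exists_decomp_of_not_chain' L hc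
      obtain ⟨u, bu⟩ := pp
      obtain ⟨v, bv⟩ := qq
      push_neg at hR
      obtain ⟨hmem, hne⟩ := hR
      have hv : v = -u := Int.units_neg_of_ne hne
      subst hv
      have hbuT : Rep T (of (φ := φ) (blockProd bu)) (blockCost bu) :=
        rep_blockProd_T bu fun x hx =>
          (hL (u, bu) (by rw [hLeq]; simp) x hx).1
      obtain ⟨pg, hpg1, hpg2⟩ : ∃ pg : G1,
          (t ^ (u : ℤ) * (of (blockProd bu) * t ^ ((-u : ℤˣ) : ℤ))
            : HNNExtension G1 H1 H2 φ) = of pg ∧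
          ∀ c : ℕ, wordLength T (of (φ := φ) pg) ≤ c → Rep S pg (M * c) := by
        rcases Int.units_eq_one_or u with rfl | rfl
        · refine ⟨((φ ⟨blockProd bu, by simpa using hmem⟩ : H2) : G1), ?_, fun c => hA _ c⟩
          have h := equiv_eq_conj (φ := φ) ⟨blockProd bu, by simpa using hmem⟩
          simp only [Units.val_one, zpow_one, Units.val_neg, zpow_neg] at *
          rw [h, mul_assoc]
        · refine ⟨((φ.symm ⟨blockProd bu, by simpa using hmem⟩ : H1) : G1), ?_, fun c => hB _ c⟩
          have h := equiv_symm_eq_conj (φ := φ) ⟨blockProd bu, by simpa using hmem⟩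
          simp only [Units.val_one, zpow_one, Units.val_neg, zpow_neg, neg_neg, inv_inv] at *
          rw [h, mul_assoc]
      have htpow : ∀ u' : ℤˣ, Rep T ((t ^ (u' : ℤ)) : HNNExtension G1 H1 H2 φ) 1 := by
        intro u'
        rcases Int.units_eq_one_or u' with rfl | rfl
        · simpa using Rep.single (Or.inl ht)
        · have : Rep T ((t⁻¹ : HNNExtension G1 H1 H2 φ)) 1 :=
            Rep.single (Or.inr (by simpa using ht))
          simpa using this
      have hpgT : Rep T (of (φ := φ) pg) (blockCost bu + 2) := by
        rw [← hpg1]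
        have := (htpow u).mul (hbuT.mul (htpow (-u)))
        exact this.mono (by omega)
      have hpgS : Rep S pg (M * (blockCost bu + 2)) :=
        hpg2 _ (wordLength_le_of_rep hpgT)
      rcases L₁.eq_nil_or_concat with rfl | ⟨L₁', r, rfl⟩
      · -- merge into the head block
        simp only [List.nil_append] at hLeq
        have hlen' : L₂.length ≤ N := by
          rw [hLeq] at hlen; simp at hlen; omega
        have hb' : ∀ x ∈ b₀ ++ (pg, blockCost bu + 2) :: bv,
            Rep T (of (φ := φ) x.1) x.2 ∧ Rep S x.1 (M * x.2) := by
          intro x hx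
          rcases List.mem_append.mp hx with h | h
          · exact hb x h
          · rcases List.mem_cons.mp h with rfl | h
            · exact ⟨hpgT, hpgS⟩
            · exact hL (-u, bv) (by rw [hLeq]; simp) x h
        have hL' : ∀ p ∈ L₂, ∀ x ∈ p.2,
            Rep T (of (φ := φ) x.1) x.2 ∧ Rep S x.1 (M * x.2) := by
          intro p hp x hx
          exact hL p (by rw [hLeq]; simp [hp]) x hx
        have hprod' : wordProd φ (b₀ ++ (pg, blockCost bu + 2) :: bv) L₂ = of g := by
          rw [← hprod, hLeq]
          simp only [wordProd, blockProd_append_cons, List.map_cons, List.prod_cons,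
            map_mul, ← hpg1, mul_assoc]
        have hcost : wordCost (b₀ ++ (pg, blockCost bu + 2) :: bv) L₂ = wordCost b₀ L := by
          rw [hLeq]
          simp only [wordCost, blockCost, List.map_append, List.map_cons, List.concat_eq_append, List.map_nil, List.sum_nil, List.sum_append,
            List.sum_cons]
          omega
        have := ih (b₀ ++ (pg, blockCost bu + 2) :: bv) L₂ hlen' hb' hL' g hprod'
        rwa [hcost] at this
      · -- merge into the last block of `L₁`
        have hlen' : (L₁' ++ (r.1, r.2 ++ (pg, blockCost bu + 2) :: bv) :: L₂).length ≤ N := by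
          rw [hLeq] at hlen; simp at hlen ⊢; omega
        have hL'' : ∀ p ∈ L₁' ++ (r.1, r.2 ++ (pg, blockCost bu + 2) :: bv) :: L₂,
            ∀ x ∈ p.2, Rep T (of (φ := φ) x.1) x.2 ∧ Rep S x.1 (M * x.2) := by
          intro p hp x hx
          rcases List.mem_append.mp hp with h | h
          · exact hL p (by rw [hLeq]; simp [h]) x hx
          rcases List.mem_cons.mp h with rfl | h
          · rcases List.mem_append.mp hx with h' | h'
            · exact hL r (by rw [hLeq]; simp) x h'
            rcases List.mem_cons.mp h' with rfl | h'
            · exact ⟨hpgT, hpgS⟩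
            · exact hL (-u, bv) (by rw [hLeq]; simp) x h'
          · exact hL p (by rw [hLeq]; simp [h]) x hx
        have hprod' : wordProd φ b₀ (L₁' ++ (r.1, r.2 ++ (pg, blockCost bu + 2) :: bv) :: L₂)
            = of g := by
          rw [← hprod, hLeq]
          simp only [wordProd, blockProd_append_cons, List.map_append, List.map_cons,
            List.prod_append, List.prod_cons, List.concat_eq_append, List.map_nil, List.prod_nil, one_mul, map_mul, ← hpg1, mul_assoc]
        have hcost : wordCost b₀ (L₁' ++ (r.1, r.2 ++ (pg, blockCost bu + 2) :: bv) :: L₂)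
            = wordCost b₀ L := by
          rw [hLeq]
          simp only [wordCost, blockCost, List.map_append, List.map_cons, List.concat_eq_append, List.map_nil, List.sum_nil, List.sum_append,
            List.sum_cons]
          omega
        have := ih b₀ (L₁' ++ (r.1, r.2 ++ (pg, blockCost bu + 2) :: bv) :: L₂)
          hlen' hb hL'' g hprod'
        rwa [hcost] at this

end HNN2
section HNN3

variable {G1 : Type*} [Group G1] {H1 H2 : Subgroup G1} {φ : H1 ≃* H2}

theorem rep_val {S : Set G1} {H : Subgroup G1} {SS : Set H} {k : H} {n : ℕ}
    (hrep : Rep SS k n) (hS : Subtype.val '' SS ⊆ S) : Rep S (k : G1) n := by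
  obtain ⟨l, h1, h2, h3⟩ := hrep
  refine ⟨l.map Subtype.val, by simpa using h1, ?_, ?_⟩
  · intro x hx
    obtain ⟨y, hy, rfl⟩ := List.mem_map.mp hx
    rcases h2 y hy with h | h
    · exact Or.inl (hS ⟨y, h, rfl⟩)
    · exact Or.inr (hS ⟨y⁻¹, h, rfl⟩)
  · rw [← h3]
    exact (map_list_prod H.subtype l).symm

theorem exists_blocks {S : Set G1} {T : Set (HNNExtension G1 H1 H2 φ)} {M : ℕ} (hM : 0 < M)
    (hT : T = (HNNExtension.of '' S) ∪ {HNNExtension.t}) :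
    ∀ l : List (HNNExtension G1 H1 H2 φ), (∀ x ∈ l, x ∈ T ∨ x⁻¹ ∈ T) →
    ∃ (b₀ : List (G1 × ℕ)) (L : List (ℤˣ × List (G1 × ℕ))),
      wordProd φ b₀ L = l.prod ∧ wordCost b₀ L = l.length ∧
      (∀ x ∈ b₀, Rep T (of (φ := φ) x.1) x.2 ∧ Rep S x.1 (M * x.2)) ∧
      (∀ p ∈ L, ∀ x ∈ p.2, Rep T (of (φ := φ) x.1) x.2 ∧ Rep S x.1 (M * x.2))
  | [], _ => ⟨[], [], by simp [wordProd, blockProd], by simp [wordCost, blockCost],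
      by simp, by simp⟩
  | x :: l, h => by
    obtain ⟨b₀, L, h1, h2, h3, h4⟩ :=
      exists_blocks hM hT l fun y hy => h y (List.mem_cons_of_mem x hy)
    have hx := h x List.mem_cons_self
    have hcases : (∃ s : G1, x = of s ∧ (s ∈ S ∨ s⁻¹ ∈ S)) ∨ x = t ∨ x = t⁻¹ := by
      rw [hT] at hx
      rcases hx with (⟨s, hs, rfl⟩ | hx) | (⟨s, hs, hxs⟩ | hx)
      · exact Or.inl ⟨s, rfl, Or.inl hs⟩
      · exact Or.inr (Or.inl hx)
      · refine Or.inl ⟨s⁻¹, ?_, Or.inr (by simpa using hs)⟩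
        rw [map_inv, hxs, inv_inv]
      · exact Or.inr (Or.inr (by rw [← inv_inv x, hx]))
    rcases hcases with ⟨s, rfl, hs⟩ | rfl | rfl
    · -- a base letter
      refine ⟨(s, 1) :: b₀, L, ?_, ?_, ?_, h4⟩
      · rw [List.prod_cons, ← h1]
        simp [wordProd, blockProd, map_mul, mul_assoc]
      · have : wordCost ((s, 1) :: b₀) L = 1 + wordCost b₀ L := by
          simp only [wordCost, blockCost, List.map_cons, List.sum_cons]
          omega
        rw [this, h2, List.length_cons]
        omega
      · intro y hy
        rcases List.mem_cons.mp hy with rfl | hy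
        · refine ⟨Rep.single ?_, (Rep.single hs).mono (by omega)⟩
          rcases hs with hs | hs
          · exact Or.inl (by rw [hT]; exact Or.inl ⟨s, hs, rfl⟩)
          · exact Or.inr (by rw [hT]; exact Or.inl ⟨s⁻¹, hs, by simp⟩)
        · exact h3 y hy
    · -- the letter `t`
      refine ⟨[], (1, b₀) :: L, ?_, ?_, by simp, ?_⟩
      · rw [List.prod_cons, ← h1]
        simp [wordProd, blockProd, mul_assoc]
      · have : wordCost [] ((1, b₀) :: L) = 1 + wordCost b₀ L := by
          simp only [wordCost, blockCost, List.map_cons, List.sum_cons, List.map_nil,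
            List.sum_nil]
          omega
        rw [this, h2, List.length_cons]
        omega
      · intro p hp y hy
        rcases List.mem_cons.mp hp with rfl | hp
        · exact h3 y hy
        · exact h4 p hp y hy
    · -- the letter `t⁻¹`
      refine ⟨[], (-1, b₀) :: L, ?_, ?_, by simp, ?_⟩
      · rw [List.prod_cons, ← h1]
        simp [wordProd, blockProd, mul_assoc]
      · have : wordCost [] ((-1, b₀) :: L) = 1 + wordCost b₀ L := by
          simp only [wordCost, blockCost, List.map_cons, List.sum_cons, List.map_nil,
            List.sum_nil]
          omega
        rw [this, h2, List.length_cons]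
        omega
      · intro p hp y hy
        rcases List.mem_cons.mp hp with rfl | hp
        · exact h3 y hy
        · exact h4 p hp y hy

end HNN3
end HNNAux

open HNNAux HNNExtension

/-- Let `G₁` be a group with finite generating set `S`, let `φ : H₁ ≃* H₂` be an isomorphism of
subgroups of `G₁`, let `S_H` be a finite generating set of `H₁` with `S_H ∪ φ(S_H) ⊆ S`, and let
`G = HNNExtension G₁ H₁ H₂ φ` with finite generating set `T = of(S) ∪ {t}`. If there is a
positive integer `M` with `|h|_{S_H} ≤ M |h|_T` for every `h ∈ H₁` and
`|k|_{φ(S_H)} ≤ M |k|_T` for every `k ∈ H₂`, then `|g|_S ≤ M |g|_T` for every `g ∈ G₁`;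
in particular `G₁` is undistorted in `G`. -/
theorem hnn_base_group_undistorted
    {G1 : Type*} [Group G1]
    (S : Set G1) (hSfin : S.Finite) (hSgen : Subgroup.closure S = ⊤)
    (H1 H2 : Subgroup G1) (φ : H1 ≃* H2)
    (SH : Set H1) (hSHfin : SH.Finite) (hSHgen : Subgroup.closure SH = ⊤)
    (hsub : (Subtype.val '' SH) ∪ (Subtype.val '' ((fun h => φ h) '' SH)) ⊆ S)
    (T : Set (HNNExtension G1 H1 H2 φ))
    (hT : T = (HNNExtension.of '' S) ∪ {HNNExtension.t})
    (M : ℕ) (hM : 0 < M)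
    (hH : ∀ h : H1, wordLength SH h ≤ M * wordLength T (HNNExtension.of (h : G1)))
    (hK : ∀ k : H2,
      wordLength ((fun h => φ h) '' SH) k ≤ M * wordLength T (HNNExtension.of (k : G1))) :
    (∀ g : G1, wordLength S g ≤ M * wordLength T (HNNExtension.of g)) ∧
    ∃ M' : ℕ, ∀ g : G1,
      wordLength S g ≤ M' * wordLength T (HNNExtension.of g) + M' := by
  have ht : (t : HNNExtension G1 H1 H2 φ) ∈ T := by rw [hT]; exact Or.inr rfl
  -- the image of `SH` under `φ` generates `H2`
  have hSH2gen : Subgroup.closure ((fun h => φ h) '' SH) = ⊤ := by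
    rw [show ((fun h => φ h) '' SH) = ⇑(φ.toMonoidHom) '' SH from rfl,
      ← MonoidHom.map_closure, hSHgen]
    rw [Subgroup.eq_top_iff']
    intro k
    exact ⟨φ.symm k, Subgroup.mem_top _, by simp⟩
  -- the two replacement hypotheses for the key lemma
  have hA : ∀ (a : H1) (c : ℕ), wordLength T (of (φ := φ) ((φ a : H2) : G1)) ≤ c →
      Rep S ((φ a : H2) : G1) (M * c) := by
    intro a c hc
    have h1 : wordLength ((fun h => φ h) '' SH) (φ a) ≤ M * c :=
      le_trans (hK (φ a)) (Nat.mul_le_mul le_rfl hc)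
    have h2 : (φ a : H2) ∈ Subgroup.closure ((fun h => φ h) '' SH) := by
      rw [hSH2gen]; exact Subgroup.mem_top _
    exact rep_val (rep_of_wordLength_le h2 h1)
      (Set.Subset.trans Set.subset_union_right hsub)
  have hB : ∀ (b : H2) (c : ℕ), wordLength T (of (φ := φ) ((φ.symm b : H1) : G1)) ≤ c →
      Rep S ((φ.symm b : H1) : G1) (M * c) := by
    intro b c hc
    have h1 : wordLength SH (φ.symm b) ≤ M * c :=
      le_trans (hH (φ.symm b)) (Nat.mul_le_mul le_rfl hc)
    have h2 : (φ.symm b : H1) ∈ Subgroup.closure SH := by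
      rw [hSHgen]; exact Subgroup.mem_top _
    exact rep_val (rep_of_wordLength_le h2 h1)
      (Set.Subset.trans Set.subset_union_left hsub)
  have main : ∀ g : G1, wordLength S g ≤ M * wordLength T (HNNExtension.of g) := by
    intro g
    -- `of g` lies in the closure of `T`
    have hgcl : of (φ := φ) g ∈ Subgroup.closure T := by
      have hg : g ∈ Subgroup.closure S := by rw [hSgen]; exact Subgroup.mem_top g
      have h2 : of (φ := φ) g ∈ Subgroup.map (of (φ := φ)) (Subgroup.closure S) :=
        ⟨g, hg, rfl⟩
      rw [MonoidHom.map_closure] at h2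
      refine Subgroup.closure_mono ?_ h2
      rw [hT]; exact Set.subset_union_left
    obtain ⟨l0, hl01, hl02⟩ := exists_word_of_mem_closure hgcl
    have hne : {n | ∃ l : List (HNNExtension G1 H1 H2 φ), l.length = n ∧
        (∀ x ∈ l, x ∈ T ∨ x⁻¹ ∈ T) ∧ l.prod = of g}.Nonempty :=
      ⟨l0.length, l0, rfl, hl01, hl02⟩
    obtain ⟨l, hlen, hmem, hprodl⟩ := Nat.sInf_mem hne
    obtain ⟨b₀, L, hp, hcost, h3, h4⟩ := exists_blocks hM hT l hmem
    have hrep := key ht hA hB L.length b₀ L le_rfl h3 h4 g (by rw [hp, hprodl])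
    rw [hcost, hlen] at hrep
    exact wordLength_le_of_rep hrep
  exact ⟨main, M, fun g => le_trans (main g) (Nat.le_add_right _ _)⟩
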